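/- Let M = (E, r) be a p-entropic matroid realized by random variables {X_e} with values in F_p, and let i ∈ E with r({i}) = 1. Then the contraction M/{i} is p-entropic: for any value k with P(X_i = k) > 0, the conditional distribution of {X_e}_{e≠i} given X_i = k has base-p entropy function equal to the rank function of M/{i}, i.e., H(X_A | X_i = k) = r(A ∪ {i}) − 1 for all A ⊆ E∖{i}. -/

import Mathlib

open scoped Classical BigOperators

/-- Shannon entropy in base `q` of a probability mass function on a finite type. -/
noncomputable def shannonEntropy {α : Type*} [Fintype α] (q : ℝ) (μ : PMF α) : ℝ :=
  -∑ x : α, (μ x).toReal * Real.logb q (μ x).toReal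

/-- Marginal of a distribution on `ι → α` on the coordinates in `S`. -/
noncomputable def marg {ι α : Type*} (μ : PMF (ι → α)) (S : Finset ι) :
    PMF ({ i // i ∈ S } → α) :=
  μ.map fun x i => x i.1

/-- Probability of an event under a PMF on a finite type. -/
noncomputable def prob {α : Type*} [Fintype α] (μ : PMF α) (s : Set α) : ℝ :=
  ∑ x : α, if x ∈ s then (μ x).toReal else 0

/-- Base-`q` Shannon entropy of the variables indexed by `A` under the conditional
distribution given the event `X_i = k`. -/
noncomputable def condEntropyGiven {ι α : Type*} [Fintype ι] [Fintype α]
    (q : ℝ) (μ : PMF (ι → α)) (A : Finset ι) (i : ι) (k : α) : ℝ :=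
  -∑ a : ({ j // j ∈ A } → α),
    (prob μ {x | (∀ j : { j // j ∈ A }, x j.1 = a j) ∧ x i = k} /
        prob μ {x | x i = k}) *
      Real.logb q
        (prob μ {x | (∀ j : { j // j ∈ A }, x j.1 = a j) ∧ x i = k} /
          prob μ {x | x i = k})

/-! ### Auxiliary abstract entropy lemmas -/

/-- Base-`q` Shannon entropy of a nonnegative real vector. -/
noncomputable def entb (q : ℝ) {β : Type*} [Fintype β] (v : β → ℝ) : ℝ :=
  -∑ b : β, v b * Real.logb q (v b)

lemma gibbs {β : Type*} [Fintype β] {q : ℝ} (hq : 1 < q) {v w : β → ℝ}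
    (hv : ∀ b, 0 ≤ v b) (hw : ∀ b, 0 ≤ w b) (hv1 : ∑ b : β, v b = 1)
    (hw1 : ∑ b : β, w b ≤ 1) (hpos : ∀ b, 0 < v b → 0 < w b) :
    entb q v ≤ -∑ b : β, v b * Real.logb q (w b) := by
  have hlq : 0 < Real.log q := Real.log_pos hq
  have key : ∀ b, v b * Real.log (w b) - v b * Real.log (v b) ≤ w b - v b := by
    intro b
    rcases (hv b).eq_or_lt with h | h
    · simp [← h, hw b]
    · have hwb := hpos b h
      have h1 : Real.log (w b / v b) ≤ w b / v b - 1 :=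
        Real.log_le_sub_one_of_pos (div_pos hwb h)
      have h2 : Real.log (w b / v b) = Real.log (w b) - Real.log (v b) :=
        Real.log_div (ne_of_gt hwb) (ne_of_gt h)
      rw [h2] at h1
      have := mul_le_mul_of_nonneg_left h1 (le_of_lt h)
      calc v b * Real.log (w b) - v b * Real.log (v b)
          = v b * (Real.log (w b) - Real.log (v b)) := by ring
        _ ≤ v b * (w b / v b - 1) := this
        _ = w b - v b := by field_simp
  have hsum : ∑ b : β, (v b * Real.log (w b) - v b * Real.log (v b)) ≤ 0 := by
    calc ∑ b : β, (v b * Real.log (w b) - v b * Real.log (v b))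
        ≤ ∑ b : β, (w b - v b) := Finset.sum_le_sum fun b _ => key b
      _ = (∑ b : β, w b) - ∑ b : β, v b := Finset.sum_sub_distrib _ _
      _ ≤ 0 := by rw [hv1]; linarith
  rw [Finset.sum_sub_distrib] at hsum
  simp only [entb, ← Real.log_div_log, mul_div_assoc']
  rw [← Finset.sum_div, ← Finset.sum_div, neg_le_neg_iff, div_le_div_iff_of_pos_right hlq]
  linarith

lemma mono_pair {κ β : Type*} [Fintype κ] [Fintype β] {q : ℝ} (hq : 1 < q)
    (v : κ → β → ℝ) (hv : ∀ k b, 0 ≤ v k b) :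
    entb q (fun b => ∑ k : κ, v k b) ≤ entb q (fun z : κ × β => v z.1 z.2) := by
  have hub : ∀ k b, v k b ≤ ∑ k' : κ, v k' b := fun k b =>
    Finset.single_le_sum (fun k' _ => hv k' b) (Finset.mem_univ k)
  have h1 : entb q (fun b => ∑ k : κ, v k b)
      = -∑ z : κ × β, v z.1 z.2 * Real.logb q (∑ k' : κ, v k' z.2) := by
    simp only [entb]
    congr 1
    rw [Fintype.sum_prod_type_right]
    refine Finset.sum_congr rfl fun b _ => ?_
    simp [Finset.sum_mul]
  rw [h1, entb, neg_le_neg_iff]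
  refine Finset.sum_le_sum fun z _ => ?_
  rcases (hv z.1 z.2).eq_or_lt with h | h
  · simp [← h]
  · exact mul_le_mul_of_nonneg_left
      (Real.logb_le_logb_of_le hq h (hub z.1 z.2)) (le_of_lt h)

lemma upper_pair {κ β : Type*} [Fintype κ] [Fintype β] [Nonempty κ] {q : ℝ} (hq : 1 < q)
    (v : κ → β → ℝ) (hv : ∀ k b, 0 ≤ v k b) (hv1 : ∑ z : κ × β, v z.1 z.2 = 1) :
    entb q (fun z : κ × β => v z.1 z.2)
      ≤ entb q (fun b => ∑ k : κ, v k b) + Real.logb q (Fintype.card κ) := by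
  set u : β → ℝ := fun b => ∑ k : κ, v k b with hu
  have hc : (0:ℝ) < Fintype.card κ := by
    exact_mod_cast Fintype.card_pos
  have hunn : ∀ b, 0 ≤ u b := fun b => Finset.sum_nonneg fun k _ => hv k b
  have hub : ∀ k b, v k b ≤ u b := fun k b =>
    Finset.single_le_sum (fun k' _ => hv k' b) (Finset.mem_univ k)
  have hu1 : ∑ b : β, u b = 1 := by
    rw [← hv1, Fintype.sum_prod_type_right]
  have hw1 : ∑ z : κ × β, u z.2 / (Fintype.card κ : ℝ) = 1 := by
    rw [Fintype.sum_prod_type_right]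
    simp only [Finset.sum_const, Finset.card_univ, nsmul_eq_mul]
    have : ∀ b, (Fintype.card κ : ℝ) * (u b / (Fintype.card κ : ℝ)) = u b := by
      intro b; field_simp
    rw [Finset.sum_congr rfl fun b _ => this b, hu1]
  have hg := gibbs (β := κ × β) hq (v := fun z => v z.1 z.2)
      (w := fun z => u z.2 / (Fintype.card κ : ℝ))
      (fun z => hv z.1 z.2) (fun z => div_nonneg (hunn z.2) (le_of_lt hc))
      hv1 (le_of_eq hw1)
      (fun z hz => div_pos (lt_of_lt_of_le hz (hub z.1 z.2)) hc)
  refine hg.trans (le_of_eq ?_)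
  have hterm : ∀ z : κ × β,
      v z.1 z.2 * Real.logb q (u z.2 / (Fintype.card κ : ℝ))
        = v z.1 z.2 * Real.logb q (u z.2) - v z.1 z.2 * Real.logb q (Fintype.card κ) := by
    intro z
    rcases (hv z.1 z.2).eq_or_lt with h | h
    · simp [← h]
    · rw [Real.logb_div (ne_of_gt (lt_of_lt_of_le h (hub z.1 z.2))) (ne_of_gt hc)]
      ring
  rw [Finset.sum_congr rfl fun z _ => hterm z, Finset.sum_sub_distrib]
  have h1 : ∑ z : κ × β, v z.1 z.2 * Real.logb q (u z.2)
      = ∑ b : β, u b * Real.logb q (u b) := by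
    rw [Fintype.sum_prod_type_right]
    exact Finset.sum_congr rfl fun b _ => by simp only []; rw [← Finset.sum_mul]
  have h2 : ∑ z : κ × β, v z.1 z.2 * Real.logb q (Fintype.card κ)
      = Real.logb q (Fintype.card κ) := by
    rw [← Finset.sum_mul, hv1, one_mul]
  rw [h1, h2, entb]
  ring

lemma chain_pair {κ β : Type*} [Fintype κ] [Fintype β] {q : ℝ}
    (v : κ → β → ℝ) (hv : ∀ k b, 0 ≤ v k b) :
    entb q (fun z : κ × β => v z.1 z.2)
      = entb q (fun k => ∑ b : β, v k b)
        + ∑ k : κ, (∑ b : β, v k b) * entb q (fun b => v k b / ∑ b' : β, v k b') := by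
  have key : ∀ k : κ, -∑ b : β, v k b * Real.logb q (v k b)
      = -((∑ b : β, v k b) * Real.logb q (∑ b : β, v k b))
        + (∑ b : β, v k b) * entb q (fun b => v k b / ∑ b' : β, v k b') := by
    intro k
    set W := ∑ b : β, v k b with hW
    rcases (Finset.sum_nonneg fun b (_ : b ∈ Finset.univ) => hv k b).eq_or_lt with h | h
    · have hz : ∀ b ∈ Finset.univ, v k b = 0 :=
        (Finset.sum_eq_zero_iff_of_nonneg fun b _ => hv k b).mp h.symm
      have : ∀ b : β, v k b = 0 := fun b => hz b (Finset.mem_univ b)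
      simp only [entb, this, ← h]
      simp
      exact Or.inl h.symm
    · have hWne : W ≠ 0 := ne_of_gt h
      have hterm : ∀ b : β, (v k b / W) * Real.logb q (v k b / W)
          = (v k b * Real.logb q (v k b) - v k b * Real.logb q W) / W := by
        intro b
        rcases (hv k b).eq_or_lt with h0 | h0
        · simp [← h0]
        · rw [Real.logb_div (ne_of_gt h0) hWne]
          field_simp
      have : entb q (fun b => v k b / W)
          = -((∑ b : β, v k b * Real.logb q (v k b)) - W * Real.logb q W) / W := by
        rw [entb]
        rw [Finset.sum_congr rfl fun b _ => hterm b, ← Finset.sum_div,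
          Finset.sum_sub_distrib, ← Finset.sum_mul, ← hW, neg_div]
      rw [this]
      field_simp
      ring
  have lhs_eq : entb q (fun z : κ × β => v z.1 z.2)
      = ∑ k : κ, -∑ b : β, v k b * Real.logb q (v k b) := by
    rw [entb, Fintype.sum_prod_type, ← Finset.sum_neg_distrib]
  rw [lhs_eq, Finset.sum_congr rfl fun k _ => key k, Finset.sum_add_distrib,
    Finset.sum_neg_distrib, entb]

/-! ### Concrete plumbing -/

lemma entb_equiv {q : ℝ} {β γ : Type*} [Fintype β] [Fintype γ] (e : β ≃ γ) (v : γ → ℝ) :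
    entb q (fun b => v (e b)) = entb q v := by
  rw [entb, entb, ← Equiv.sum_comp e (fun c => v c * Real.logb q (v c))]

noncomputable def splitEquiv {E : Type*} (α : Type*) (j : E) (S : Finset E) (hj : j ∉ S) :
    ({ x // x ∈ insert j S } → α) ≃ α × ({ x // x ∈ S } → α) where
  toFun f := (f ⟨j, Finset.mem_insert_self j S⟩,
    fun a => f ⟨a.1, Finset.mem_insert_of_mem a.2⟩)
  invFun := fun kg a => if h : a.1 ∈ S then kg.2 ⟨a.1, h⟩ else kg.1
  left_inv f := by
    funext a
    rcases a with ⟨a, ha⟩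
    by_cases h : a ∈ S
    · simp only [dif_pos h]
    · have : a = j := by
        rcases Finset.mem_insert.mp ha with h' | h'
        · exact h'
        · exact absurd h' h
      subst this
      simp only [dif_neg h]
  right_inv := by
    rintro ⟨k, g⟩
    refine Prod.ext ?_ ?_
    · simp only [dif_neg hj]
    · funext a
      simp only [dif_pos a.2]

section Conc
variable {E α : Type*} [Fintype E] [Fintype α]

noncomputable def margP (μ : PMF (E → α)) (S : Finset E) (a : { j // j ∈ S } → α) : ℝ :=
  prob μ {x | ∀ j : { j // j ∈ S }, x j.1 = a j}

noncomputable def condP (μ : PMF (E → α)) (i : E) (k : α) (S : Finset E)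
    (a : { j // j ∈ S } → α) : ℝ :=
  prob μ {x | (∀ j : { j // j ∈ S }, x j.1 = a j) ∧ x i = k}

lemma prob_nonneg (μ : PMF (E → α)) (s : Set (E → α)) : 0 ≤ prob μ s :=
  Finset.sum_nonneg fun x _ => by positivity

lemma sum_toReal_one (μ : PMF (E → α)) : ∑ x : E → α, (μ x).toReal = 1 := by
  have h := μ.tsum_coe
  rw [tsum_fintype] at h
  have := congrArg ENNReal.toReal h
  rwa [ENNReal.toReal_sum (fun a _ => μ.apply_ne_top a), ENNReal.toReal_one] at this

lemma marg_toReal (μ : PMF (E → α)) (S : Finset E) (a : { j // j ∈ S } → α) :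
    ((marg μ S) a).toReal = margP μ S a := by
  rw [marg, PMF.map_apply, tsum_fintype, ENNReal.toReal_sum (fun x _ => by
    split_ifs
    · exact μ.apply_ne_top x
    · exact ENNReal.zero_ne_top)]
  rw [margP, prob]
  refine Finset.sum_congr rfl fun x _ => ?_
  have hiff : (a = fun i : { j // j ∈ S } => x i.1)
      ↔ (∀ j : { j // j ∈ S }, x j.1 = a j) := by
    constructor
    · intro h j; rw [h]
    · intro h; funext j; rw [h j]
  simp only [apply_ite ENNReal.toReal, ENNReal.toReal_zero, Set.mem_setOf_eq, hiff]

lemma shannon_eq_entb (q : ℝ) (μ : PMF (E → α)) (S : Finset E) :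
    shannonEntropy q (marg μ S) = entb q (margP μ S) := by
  rw [shannonEntropy, entb]
  congr 1
  exact Finset.sum_congr rfl fun a _ => by rw [marg_toReal]

lemma sum_condP (μ : PMF (E → α)) (i : E) (k : α) (S : Finset E) :
    ∑ a : { j // j ∈ S } → α, condP μ i k S a = prob μ {x | x i = k} := by
  simp only [condP, prob, Set.mem_setOf_eq]
  rw [Finset.sum_comm]
  refine Finset.sum_congr rfl fun x _ => ?_
  rw [Finset.sum_eq_single (fun j => x j.1 : { j // j ∈ S } → α)]
  · simp
  · intro a _ ha
    rw [if_neg]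
    rintro ⟨h1, -⟩
    exact ha (funext fun j => (h1 j).symm)
  · intro h; exact absurd (Finset.mem_univ _) h

lemma sum_prob_eq_one (μ : PMF (E → α)) (i : E) :
    ∑ k : α, prob μ {x | x i = k} = 1 := by
  simp only [prob, Set.mem_setOf_eq]
  rw [Finset.sum_comm]
  rw [Finset.sum_congr rfl fun x _ => Finset.sum_ite_eq (Finset.univ) (x i)
    (fun _ => (μ x).toReal)]
  simp [sum_toReal_one μ]

lemma margP_split (μ : PMF (E → α)) (i : E) (S : Finset E) (hiS : i ∉ S) (k : α)
    (a : { j // j ∈ S } → α) :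
    margP μ (insert i S) ((splitEquiv α i S hiS).symm (k, a)) = condP μ i k S a := by
  rw [margP, condP]
  congr 1
  ext x
  simp only [Set.mem_setOf_eq, splitEquiv, Equiv.coe_fn_symm_mk]
  constructor
  · intro h
    refine ⟨fun j => ?_, ?_⟩
    · have := h ⟨j.1, Finset.mem_insert_of_mem j.2⟩
      rwa [dif_pos j.2] at this
    · have := h ⟨i, Finset.mem_insert_self i S⟩
      rwa [dif_neg hiS] at this
  · rintro ⟨h1, h2⟩ j
    by_cases h : j.1 ∈ S
    · rw [dif_pos h]; exact h1 ⟨j.1, h⟩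
    · rw [dif_neg h]
      have : j.1 = i := by
        rcases Finset.mem_insert.mp j.2 with h' | h'
        · exact h'
        · exact absurd h' h
      rw [this, h2]

lemma sum_condP_split (μ : PMF (E → α)) (i : E) (k : α) (j : E) (S : Finset E)
    (hjS : j ∉ S) (a : { x // x ∈ S } → α) :
    ∑ m : α, condP μ i k (insert j S) ((splitEquiv α j S hjS).symm (m, a))
      = condP μ i k S a := by
  have hset : ∀ m : α,
      {x : E → α | (∀ j' : { x // x ∈ insert j S },
          x j'.1 = (splitEquiv α j S hjS).symm (m, a) j') ∧ x i = k}
        = {x : E → α | ((∀ j' : { x // x ∈ S }, x j'.1 = a j') ∧ x j = m) ∧ x i = k} := by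
    intro m
    ext x
    simp only [Set.mem_setOf_eq, splitEquiv, Equiv.coe_fn_symm_mk]
    constructor
    · rintro ⟨h1, h2⟩
      refine ⟨⟨fun j' => ?_, ?_⟩, h2⟩
      · have := h1 ⟨j'.1, Finset.mem_insert_of_mem j'.2⟩
        rwa [dif_pos j'.2] at this
      · have := h1 ⟨j, Finset.mem_insert_self j S⟩
        rwa [dif_neg hjS] at this
    · rintro ⟨⟨h1, h2⟩, h3⟩
      refine ⟨fun j' => ?_, h3⟩
      by_cases h : j'.1 ∈ S
      · rw [dif_pos h]; exact h1 ⟨j'.1, h⟩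
      · rw [dif_neg h]
        have : j'.1 = j := by
          rcases Finset.mem_insert.mp j'.2 with h' | h'
          · exact h'
          · exact absurd h' h
        rw [this, h2]
  simp only [condP, hset]
  simp only [prob, Set.mem_setOf_eq]
  rw [Finset.sum_comm]
  refine Finset.sum_congr rfl fun x _ => ?_
  rw [Finset.sum_eq_single (x j)]
  · have hiff : (((∀ j' : { x' // x' ∈ S }, x j'.1 = a j') ∧ x j = x j) ∧ x i = k)
        ↔ ((∀ j' : { x' // x' ∈ S }, x j'.1 = a j') ∧ x i = k) := by
      constructor
      · rintro ⟨⟨h1, -⟩, h2⟩; exact ⟨h1, h2⟩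
      · rintro ⟨h1, h2⟩; exact ⟨⟨h1, rfl⟩, h2⟩
    simp only [hiff]
    simp
  · intro m _ hm
    rw [if_neg]
    rintro ⟨⟨-, h2⟩, -⟩
    exact hm h2.symm
  · intro h; exact absurd (Finset.mem_univ _) h

lemma condE_eq_entb (q : ℝ) (μ : PMF (E → α)) (A : Finset E) (i : E) (k : α) :
    condEntropyGiven q μ A i k
      = entb q (fun a => condP μ i k A a / prob μ {x | x i = k}) := rfl

lemma chain_concrete (q : ℝ) (μ : PMF (E → α)) (i : E) (S : Finset E) (hiS : i ∉ S) :
    entb q (margP μ (insert i S))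
      = entb q (fun k : α => prob μ {x | x i = k})
        + ∑ k : α, prob μ {x | x i = k}
            * entb q (fun a => condP μ i k S a / prob μ {x | x i = k}) := by
  have h0 := chain_pair (q := q) (v := fun (k : α) (a : { x // x ∈ S } → α) => condP μ i k S a)
    (fun k a => prob_nonneg μ _)
  have h1 : entb q (fun z : α × ({ x // x ∈ S } → α) => condP μ i z.1 S z.2)
      = entb q (margP μ (insert i S)) := by
    rw [← entb_equiv ((splitEquiv α i S hiS).symm) (margP μ (insert i S))]
    congr 1
    funext z
    obtain ⟨k, a⟩ := z
    exact (margP_split μ i S hiS k a).symm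
  rw [← h1, h0]
  congr 1
  · congr 1
    funext k
    exact sum_condP μ i k S
  · refine Finset.sum_congr rfl fun k _ => ?_
    rw [sum_condP]

end Conc
/-- Contraction of a `p`-entropic matroid by an element `i` of rank 1 is `p`-entropic:
conditioning on any positive-probability value `k` of `X_i` yields an entropy function
equal to the rank function of `M/{i}`, i.e. `H(X_A | X_i = k) = r(A ∪ {i}) − 1`. -/
theorem contraction_entropic {E : Type*} [Fintype E] {p : ℕ} [NeZero p] (hp : p.Prime)
    (μ : PMF (E → ZMod p)) (r : Finset E → ℕ)
    (hent : ∀ S : Finset E, shannonEntropy p (marg μ S) = r S)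
    (i : E) (hri : r {i} = 1) :
    ∀ k : ZMod p, 0 < prob μ {x | x i = k} →
      ∀ A : Finset E, i ∉ A →
        condEntropyGiven p μ A i k = (r (insert i A) : ℝ) - 1 := by
  have hq : (1:ℝ) < (p : ℝ) := by exact_mod_cast hp.one_lt
  intro k hk A
  induction A using Finset.induction_on with
  | empty =>
    intro _
    have hset : ∀ a : ({ j // j ∈ (∅ : Finset E) } → ZMod p),
        {x : E → ZMod p | (∀ j : { j // j ∈ (∅ : Finset E) }, x j.1 = a j) ∧ x i = k}
          = {x : E → ZMod p | x i = k} := by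
      intro a
      ext x
      simp only [Set.mem_setOf_eq, and_iff_right_iff_imp]
      intro _ j
      exact absurd j.2 (Finset.notMem_empty _)
    have hone : prob μ {x : E → ZMod p | x i = k} / prob μ {x : E → ZMod p | x i = k} = 1 :=
      div_self (ne_of_gt hk)
    rw [condEntropyGiven]
    simp only [hset, hone, Real.logb_one, mul_zero, Finset.sum_const_zero, neg_zero]
    rw [show insert i (∅ : Finset E) = {i} by simp, hri]
    norm_num
  | @insert j A hjA ih =>
    intro hins
    have hiA : i ∉ A := fun h => hins (Finset.mem_insert_of_mem h)
    have hji : j ≠ i := fun h => hins (h ▸ Finset.mem_insert_self j A)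
    set w : ZMod p → ℝ := fun k' => prob μ {x : E → ZMod p | x i = k'} with hw
    set cS : ZMod p → ({ x // x ∈ A } → ZMod p) → ℝ :=
      fun k' a => condP μ i k' A a / w k' with hcS
    set cT : ZMod p → ({ x // x ∈ insert j A } → ZMod p) → ℝ :=
      fun k' b => condP μ i k' (insert j A) b / w k' with hcT
    have hwnn : ∀ k', 0 ≤ w k' := fun k' => prob_nonneg μ _
    have hsum1 : ∑ k' : ZMod p, w k' = 1 := sum_prob_eq_one μ i
    have eS : (r (insert i A) : ℝ)
        = entb p w + ∑ k' : ZMod p, w k' * entb (p : ℝ) (cS k') := by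
      rw [← hent, shannon_eq_entb, chain_concrete (p : ℝ) μ i A hiA]
    have eT : (r (insert i (insert j A)) : ℝ)
        = entb p w + ∑ k' : ZMod p, w k' * entb (p : ℝ) (cT k') := by
      rw [← hent, shannon_eq_entb, chain_concrete (p : ℝ) μ i (insert j A) hins]
    set δ : ZMod p → ℝ := fun k' => entb (p : ℝ) (cT k') - entb (p : ℝ) (cS k') with hδ
    -- per-value bounds
    have hδ0 : ∀ k', 0 < w k' → 0 ≤ δ k' := by
      intro k' hk'
      have hmono := mono_pair (κ := ZMod p) hq
        (v := fun m a => cT k' ((splitEquiv (ZMod p) j A hjA).symm (m, a)))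
        (fun m a => div_nonneg (prob_nonneg μ _) (hwnn k'))
      have hl : (fun a => ∑ m : ZMod p, cT k' ((splitEquiv (ZMod p) j A hjA).symm (m, a)))
          = cS k' := by
        funext a
        simp only [hcT, ← Finset.sum_div]
        rw [sum_condP_split μ i k' j A hjA a]
      have hr : entb (p : ℝ)
            (fun z : ZMod p × ({ x // x ∈ A } → ZMod p) =>
              cT k' ((splitEquiv (ZMod p) j A hjA).symm (z.1, z.2)))
          = entb (p : ℝ) (cT k') := by
        rw [show (fun z : ZMod p × ({ x // x ∈ A } → ZMod p) =>
            cT k' ((splitEquiv (ZMod p) j A hjA).symm (z.1, z.2)))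
          = (fun z : ZMod p × ({ x // x ∈ A } → ZMod p) =>
            cT k' ((splitEquiv (ZMod p) j A hjA).symm z)) from rfl]
        exact entb_equiv ((splitEquiv (ZMod p) j A hjA).symm) (cT k')
      rw [hl, hr] at hmono
      simpa [hδ] using sub_nonneg.mpr hmono
    have hδ1 : ∀ k', 0 < w k' → δ k' ≤ 1 := by
      intro k' hk'
      have hsum : ∑ z : ZMod p × ({ x // x ∈ A } → ZMod p),
          cT k' ((splitEquiv (ZMod p) j A hjA).symm (z.1, z.2)) = 1 := by
        rw [show (fun z : ZMod p × ({ x // x ∈ A } → ZMod p) =>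
            cT k' ((splitEquiv (ZMod p) j A hjA).symm (z.1, z.2)))
          = (fun z : ZMod p × ({ x // x ∈ A } → ZMod p) =>
            cT k' ((splitEquiv (ZMod p) j A hjA).symm z)) from rfl]
        rw [Equiv.sum_comp ((splitEquiv (ZMod p) j A hjA).symm) (cT k')]
        simp only [hcT, ← Finset.sum_div]
        rw [sum_condP μ i k' (insert j A)]
        exact div_self (ne_of_gt hk')
      have hupper := upper_pair (κ := ZMod p) hq
        (v := fun m a => cT k' ((splitEquiv (ZMod p) j A hjA).symm (m, a)))
        (fun m a => div_nonneg (prob_nonneg μ _) (hwnn k')) hsum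
      have hl : (fun a => ∑ m : ZMod p, cT k' ((splitEquiv (ZMod p) j A hjA).symm (m, a)))
          = cS k' := by
        funext a
        simp only [hcT, ← Finset.sum_div]
        rw [sum_condP_split μ i k' j A hjA a]
      have hr : entb (p : ℝ)
            (fun z : ZMod p × ({ x // x ∈ A } → ZMod p) =>
              cT k' ((splitEquiv (ZMod p) j A hjA).symm (z.1, z.2)))
          = entb (p : ℝ) (cT k') := by
        exact entb_equiv ((splitEquiv (ZMod p) j A hjA).symm) (cT k')
      rw [hl, hr] at hupper
      have hcard : Real.logb (p : ℝ) (Fintype.card (ZMod p) : ℝ) = 1 := by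
        rw [ZMod.card p]
        exact Real.logb_self_eq_one hq
      rw [hcard] at hupper
      simp only [hδ]
      linarith
    have hdsum : (r (insert i (insert j A)) : ℝ) - (r (insert i A) : ℝ)
        = ∑ k' : ZMod p, w k' * δ k' := by
      rw [eS, eT]
      simp only [hδ, mul_sub]
      rw [Finset.sum_sub_distrib]
      ring
    have htermnn : ∀ k' : ZMod p, 0 ≤ w k' * δ k' := by
      intro k'
      rcases (hwnn k').eq_or_lt with h | h
      · rw [← h, zero_mul]
      · exact mul_nonneg (le_of_lt h) (hδ0 k' h)
    have hd0 : (0:ℝ) ≤ (r (insert i (insert j A)) : ℝ) - (r (insert i A) : ℝ) := by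
      rw [hdsum]
      exact Finset.sum_nonneg fun k' _ => htermnn k'
    have hd1 : (r (insert i (insert j A)) : ℝ) - (r (insert i A) : ℝ) ≤ 1 := by
      rw [hdsum]
      calc ∑ k' : ZMod p, w k' * δ k' ≤ ∑ k' : ZMod p, w k' := by
            refine Finset.sum_le_sum fun k' _ => ?_
            rcases (hwnn k').eq_or_lt with h | h
            · rw [← h, zero_mul]
            · calc w k' * δ k' ≤ w k' * 1 :=
                    mul_le_mul_of_nonneg_left (hδ1 k' h) (le_of_lt h)
                _ = w k' := mul_one _
        _ = 1 := hsum1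
    have hn : r (insert i (insert j A)) = r (insert i A)
        ∨ r (insert i (insert j A)) = r (insert i A) + 1 := by
      have h1 : r (insert i A) ≤ r (insert i (insert j A)) := by
        have : ((r (insert i A) : ℝ)) ≤ (r (insert i (insert j A)) : ℝ) := by linarith
        exact_mod_cast this
      have h2 : r (insert i (insert j A)) ≤ r (insert i A) + 1 := by
        have : ((r (insert i (insert j A)) : ℝ)) ≤ (r (insert i A) : ℝ) + 1 := by linarith
        exact_mod_cast this
      omega
    have hihA := ih hiA
    have goal_eq : condEntropyGiven (p : ℝ) μ (insert j A) i k = entb (p : ℝ) (cT k) :=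
      condE_eq_entb (p : ℝ) μ (insert j A) i k
    have ih_eq : condEntropyGiven (p : ℝ) μ A i k = entb (p : ℝ) (cS k) :=
      condE_eq_entb (p : ℝ) μ A i k
    rcases hn with h | h
    · -- δ k = 0
      have hzero : ∑ k' : ZMod p, w k' * δ k' = 0 := by
        rw [← hdsum, h]; ring
      have hterm0 := (Finset.sum_eq_zero_iff_of_nonneg
        (fun k' _ => htermnn k')).mp hzero k (Finset.mem_univ k)
      have hδk : δ k = 0 := by
        rcases mul_eq_zero.mp hterm0 with h' | h'
        · exact absurd h' (ne_of_gt hk)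
        · exact h'
      have : entb (p : ℝ) (cT k) = entb (p : ℝ) (cS k) := by
        have := hδk
        simp only [hδ] at this
        linarith
      rw [goal_eq, this, ← ih_eq, hihA, h]
    · -- δ k = 1
      have hzero : ∑ k' : ZMod p, w k' * (1 - δ k') = 0 := by
        have hexp : ∑ k' : ZMod p, w k' * (1 - δ k')
            = (∑ k' : ZMod p, w k') - ∑ k' : ZMod p, w k' * δ k' := by
          simp only [mul_sub, mul_one]
          rw [Finset.sum_sub_distrib]
        rw [hexp, hsum1, ← hdsum, h]
        push_cast
        ring
      have htermnn' : ∀ k' : ZMod p, 0 ≤ w k' * (1 - δ k') := by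
        intro k'
        rcases (hwnn k').eq_or_lt with h' | h'
        · rw [← h', zero_mul]
        · exact mul_nonneg (le_of_lt h') (by linarith [hδ1 k' h'])
      have hterm0 := (Finset.sum_eq_zero_iff_of_nonneg
        (fun k' _ => htermnn' k')).mp hzero k (Finset.mem_univ k)
      have hδk : δ k = 1 := by
        rcases mul_eq_zero.mp hterm0 with h' | h'
        · exact absurd h' (ne_of_gt hk)
        · linarith
      have : entb (p : ℝ) (cT k) = entb (p : ℝ) (cS k) + 1 := by
        simp only [hδ] at hδk
        linarith
      rw [goal_eq, this, ← ih_eq, hihA, h]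
      push_cast
      ring
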